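/- There exists a solvable MPP instance (G, R, x_I, x_G) such that no solution simultaneously attains the minimum total distance and the minimum makespan. -/

import Mathlib

/-!
Formalization of multi-robot path planning on graphs (MPP).

An MPP instance consists of a connected simple graph `G` on a vertex type `V`,
a finite set of robots (an index type `R`), and injective start/goal
configurations `xI xG : R → V`.  A scheduled path is a map `ℕ → V`.
-/

namespace MPPFormal

variable {V R : Type}

/-- The arrival time of a path `p` with goal `g`: the smallest time `t`
with `p t = g`. -/
noncomputable def arrivalTime (g : V) (p : ℕ → V) : ℕ := sInf {t | p t = g}

/-- A feasible scheduled path from `s` to `g` in the graph `G`: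
it starts at `s`, reaches `g` at some time, stays at `g` forever after the
first time it reaches `g`, and at every time step it either traverses an
edge of `G` or stays put. -/
def FeasiblePath (G : SimpleGraph V) (s g : V) (p : ℕ → V) : Prop :=
  p 0 = s ∧ (∃ t, p t = g) ∧ (∀ t, arrivalTime g p ≤ t → p t = g) ∧
    ∀ t, G.Adj (p t) (p (t + 1)) ∨ p t = p (t + 1)

/-- Two scheduled paths collide if they meet at the same vertex at the same
time, or if they swap along an edge head-on. -/
def Collide (p q : ℕ → V) : Prop :=
  (∃ t, p t = q t) ∨ ∃ t, p t = q (t + 1) ∧ p (t + 1) = q t ∧ p t ≠ p (t + 1)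

/-- The length of a scheduled path: the number of time steps at which it
actually moves. -/
noncomputable def pathLen (p : ℕ → V) : ℕ := Set.ncard {t | p t ≠ p (t + 1)}

/-- A solution to the MPP instance `(G, R, xI, xG)`: a family of pairwise
non-colliding feasible paths, one per robot. -/
def IsSolution (G : SimpleGraph V) (xI xG : R → V) (p : R → ℕ → V) : Prop :=
  (∀ i, FeasiblePath G (xI i) (xG i) (p i)) ∧
    Pairwise fun i j => ¬ Collide (p i) (p j)

/-- `(G, xI, xG)` together with the robot index type `R` forms an MPP
instance: the graph is connected and the start and goal configurations are
injective. -/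
def IsMPPInstance (G : SimpleGraph V) (xI xG : R → V) : Prop :=
  G.Connected ∧ Function.Injective xI ∧ Function.Injective xG

variable [Fintype R]

/-- Total arrival time of a solution. -/
noncomputable def totalTime (xG : R → V) (p : R → ℕ → V) : ℕ :=
  ∑ i, arrivalTime (xG i) (p i)

/-- Makespan (last arrival time) of a solution. -/
noncomputable def makespan (xG : R → V) (p : R → ℕ → V) : ℕ :=
  Finset.univ.sup fun i => arrivalTime (xG i) (p i)

/-- Total distance traveled in a solution. -/
noncomputable def totalDist (p : R → ℕ → V) : ℕ := ∑ i, pathLen (p i)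

/-- Maximum single-robot distance of a solution. -/
noncomputable def maxDist (p : R → ℕ → V) : ℕ :=
  Finset.univ.sup fun i => pathLen (p i)

/-- Minimum total arrival time over all solutions. -/
noncomputable def minTotalTime (G : SimpleGraph V) (xI xG : R → V) : ℕ :=
  sInf {c | ∃ p, IsSolution G xI xG p ∧ totalTime xG p = c}

/-- Minimum makespan over all solutions. -/
noncomputable def minMakespan (G : SimpleGraph V) (xI xG : R → V) : ℕ :=
  sInf {c | ∃ p, IsSolution G xI xG p ∧ makespan xG p = c}

/-- Minimum total distance over all solutions. -/
noncomputable def minTotalDist (G : SimpleGraph V) (xI xG : R → V) : ℕ :=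
  sInf {c | ∃ p, IsSolution G xI xG p ∧ totalDist p = c}

/-- Minimum maximum distance over all solutions. -/
noncomputable def minMaxDist (G : SimpleGraph V) (xI xG : R → V) : ℕ :=
  sInf {c | ∃ p, IsSolution G xI xG p ∧ maxDist p = c}

end MPPFormal

namespace MPPFormal

open scoped Classical

variable {V : Type}

/-! ### General auxiliary lemmas -/

lemma collide_symm {p q : ℕ → V} (h : Collide p q) : Collide q p := by
  rcases h with ⟨t, ht⟩ | ⟨t, h1, h2, h3⟩
  · exact Or.inl ⟨t, ht.symm⟩
  · refine Or.inr ⟨t, h2.symm, h1.symm, ?_⟩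
    rw [← h1, ← h2]
    exact fun hh => h3 hh.symm

lemma arrivalTime_eq {g : V} {p : ℕ → V} {T : ℕ} (hT : p T = g)
    (hlt : ∀ t < T, p t ≠ g) : arrivalTime g p = T := by
  have h1 : arrivalTime g p ≤ T := Nat.sInf_le hT
  have h2 : arrivalTime g p ∈ {t | p t = g} := Nat.sInf_mem (s := {t | p t = g}) ⟨T, hT⟩
  simp only [Set.mem_setOf_eq] at h2
  rcases lt_or_ge (arrivalTime g p) T with h | h
  · exact absurd h2 (hlt _ h)
  · omega

lemma const_of_no_move {p : ℕ → V} {a b : ℕ} (hab : a ≤ b)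
    (h : ∀ u, a ≤ u → u < b → p u = p (u + 1)) : p a = p b := by
  induction b, hab using Nat.le_induction with
  | base => rfl
  | succ n hn ih =>
      rw [ih (fun u hu hun => h u hu (by omega)), h n hn (by omega)]

lemma phi_count {p : ℕ → V} (φ : V → ℕ)
    (h : ∀ t, p t ≠ p (t + 1) → φ (p t) ≤ φ (p (t + 1)) + 1) (n : ℕ) :
    φ (p 0) ≤ φ (p n) + ((Finset.range n).filter (fun t => p t ≠ p (t + 1))).card := by
  induction n with
  | zero => simp
  | succ n ih =>
    rw [Finset.range_add_one, Finset.filter_insert]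
    by_cases hm : p n = p (n + 1)
    · simp only [hm, ne_eq, not_true_eq_false, if_false]
      rw [← hm]
      exact ih
    · rw [if_pos hm, Finset.card_insert_of_notMem (by simp)]
      have := h n hm
      omega

lemma moves_eq {G : SimpleGraph V} {s g : V} {p : ℕ → V} (hf : FeasiblePath G s g p) :
    {t | p t ≠ p (t + 1)} =
      ↑((Finset.range (arrivalTime g p)).filter (fun t => p t ≠ p (t + 1))) := by
  ext t
  simp only [Finset.coe_filter, Finset.mem_range, Set.mem_setOf_eq]
  constructor
  · intro ht
    refine ⟨?_, ht⟩
    by_contra hge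
    have h1 := hf.2.2.1 t (by omega)
    have h2 := hf.2.2.1 (t + 1) (by omega)
    exact ht (h1.trans h2.symm)
  · tauto

lemma pathLen_eq {G : SimpleGraph V} {s g : V} {p : ℕ → V} (hf : FeasiblePath G s g p) :
    pathLen p = ((Finset.range (arrivalTime g p)).filter (fun t => p t ≠ p (t + 1))).card := by
  rw [pathLen, moves_eq hf, Set.ncard_coe_finset]

lemma pathLen_ge {G : SimpleGraph V} {s g : V} {p : ℕ → V} (hf : FeasiblePath G s g p)
    (φ : V → ℕ) (hL : ∀ u v, G.Adj u v → φ u ≤ φ v + 1) (hg : φ g = 0) :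
    φ s ≤ pathLen p := by
  have h := phi_count φ (fun t ht => hL _ _ ((hf.2.2.2 t).resolve_right ht)) (arrivalTime g p)
  have harr : p (arrivalTime g p) = g := hf.2.2.1 _ le_rfl
  rw [harr, hg, hf.1] at h
  rw [pathLen_eq hf]
  omega

/-- Structure of a feasible path of length exactly `3`: it dwells on four
successive vertices `s, v1, v2, g` forming a walk of strict edges. -/
lemma path_structure {G : SimpleGraph V} {s g : V} {p : ℕ → V}
    (hf : FeasiblePath G s g p) (h3 : pathLen p = 3) :
    ∃ t1 t2 t3 v1 v2, t1 < t2 ∧ t2 < t3 ∧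
      G.Adj s v1 ∧ G.Adj v1 v2 ∧ G.Adj v2 g ∧
      (∀ t, t ≤ t1 → p t = s) ∧ (∀ t, t1 < t → t ≤ t2 → p t = v1) ∧
      (∀ t, t2 < t → t ≤ t3 → p t = v2) ∧ (∀ t, t3 < t → p t = g) ∧
      arrivalTime g p = t3 + 1 := by
  set T := arrivalTime g p with hT
  set M := (Finset.range T).filter (fun t => p t ≠ p (t + 1)) with hM
  have hcard : M.card = 3 := by rw [← pathLen_eq hf]; exact h3
  have hmem : ∀ u, u ∈ M ↔ p u ≠ p (u + 1) := by
    intro u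
    simp only [hM, Finset.mem_filter, Finset.mem_range]
    constructor
    · tauto
    · intro hu
      refine ⟨?_, hu⟩
      by_contra hge
      exact hu ((hf.2.2.1 u (by omega)).trans (hf.2.2.1 (u + 1) (by omega)).symm)
  let e := M.orderIsoOfFin hcard
  set t1 := (e 0 : ℕ) with ht1
  set t2 := (e 1 : ℕ) with ht2
  set t3 := (e 2 : ℕ) with ht3
  have h12 : t1 < t2 := by
    have := e.strictMono (show (0 : Fin 3) < 1 by decide)
    exact_mod_cast this
  have h23 : t2 < t3 := by
    have := e.strictMono (show (1 : Fin 3) < 2 by decide)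
    exact_mod_cast this
  have hall : ∀ u, p u ≠ p (u + 1) → u = t1 ∨ u = t2 ∨ u = t3 := by
    intro u hu
    have huM : u ∈ M := (hmem u).mpr hu
    have key : e (e.symm ⟨u, huM⟩) = ⟨u, huM⟩ := e.apply_symm_apply _
    have h0 : ∀ i : Fin 3, i = 0 ∨ i = 1 ∨ i = 2 := by decide
    rcases h0 (e.symm ⟨u, huM⟩) with h | h | h <;> rw [h] at key
    · left; rw [ht1, key]
    · right; left; rw [ht2, key]
    · right; right; rw [ht3, key]
  have hmove : ∀ u, u = t1 ∨ u = t2 ∨ u = t3 → p u ≠ p (u + 1) := by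
    rintro u (rfl | rfl | rfl)
    · exact (hmem _).mp (e 0).2
    · exact (hmem _).mp (e 1).2
    · exact (hmem _).mp (e 2).2
  have hconst : ∀ a b : ℕ, a ≤ b → (∀ u, a ≤ u → u < b → ¬(u = t1 ∨ u = t2 ∨ u = t3)) →
      p a = p b := by
    intro a b hab h
    exact const_of_no_move hab (fun u hu hub => by
      by_contra hne
      exact h u hu hub (hall u hne))
  have hP0 : ∀ t, t ≤ t1 → p t = s := by
    intro t ht
    rw [← hf.1]
    exact (hconst 0 t (by omega) (by intro u hu hub; omega)).symm
  have hP1 : ∀ t, t1 < t → t ≤ t2 → p t = p (t1 + 1) := by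
    intro t ht ht'
    exact (hconst (t1 + 1) t (by omega) (by intro u hu hub; omega)).symm
  have hP2 : ∀ t, t2 < t → t ≤ t3 → p t = p (t2 + 1) := by
    intro t ht ht'
    exact (hconst (t2 + 1) t (by omega) (by intro u hu hub; omega)).symm
  have hP3 : ∀ t, t3 < t → p t = p (t3 + 1) := by
    intro t ht
    exact (hconst (t3 + 1) t (by omega) (by intro u hu hub; omega)).symm
  have harrg : p T = g := hf.2.2.1 _ le_rfl
  have hTgt : t3 < T := by
    by_contra hh
    have h1 : p t3 = g := hf.2.2.1 _ (by omega)
    have h2 : p (t3 + 1) = g := hf.2.2.1 _ (by omega)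
    exact hmove t3 (by tauto) (h1.trans h2.symm)
  have hg3 : p (t3 + 1) = g := by
    rcases Nat.eq_or_lt_of_le hTgt with h | h
    · rw [Nat.succ_eq_add_one] at h; rw [h]; exact harrg
    · rw [← hP3 T (by omega)]; exact harrg
  have hadj : ∀ u, u = t1 ∨ u = t2 ∨ u = t3 → G.Adj (p u) (p (u + 1)) :=
    fun u hu => (hf.2.2.2 u).resolve_right (hmove u hu)
  refine ⟨t1, t2, t3, p (t1 + 1), p (t2 + 1), h12, h23, ?_, ?_, ?_, hP0, hP1, hP2,
    fun t ht => (hP3 t ht).trans hg3, ?_⟩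
  · have := hadj t1 (by tauto)
    rwa [hP0 t1 le_rfl] at this
  · have := hadj t2 (by tauto)
    rwa [hP1 t2 h12 le_rfl] at this
  · have := hadj t3 (by tauto)
    rwa [hP2 t3 h23 le_rfl, hg3] at this
  · have hub : T ≤ t3 + 1 := Nat.sInf_le hg3
    omega

/-! ### The concrete instance -/

/-- Edge list of the concrete graph: a corridor `0 — 1 — 2 — 3` crossed in the
opposite direction by robot `B` going from `4` to `5` through `2, 1`, together
with a detour `4 — 6 — 7 — 8 — 5` of length four. -/
def edges9 : List (Fin 9 × Fin 9) :=
  [(0,1),(1,2),(2,3),(2,4),(1,5),(4,6),(6,7),(7,8),(8,5)]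

def G9 : SimpleGraph (Fin 9) := SimpleGraph.fromRel (fun u v => (u, v) ∈ edges9)

instance : DecidableRel G9.Adj := fun u v =>
  decidable_of_iff _ (SimpleGraph.fromRel_adj (fun u v => (u, v) ∈ edges9) u v).symm

lemma G9_conn : G9.Connected := by
  rw [SimpleGraph.connected_iff]
  refine ⟨fun u v => ?_, ⟨0⟩⟩
  have h : ∀ w : Fin 9, G9.Reachable w 2 := by
    have a01 : G9.Adj 0 1 := by decide
    have a12 : G9.Adj 1 2 := by decide
    have a32 : G9.Adj 3 2 := by decide
    have a42 : G9.Adj 4 2 := by decide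
    have a51 : G9.Adj 5 1 := by decide
    have a64 : G9.Adj 6 4 := by decide
    have a76 : G9.Adj 7 6 := by decide
    have a87 : G9.Adj 8 7 := by decide
    intro w
    fin_cases w
    · exact (a01.reachable).trans a12.reachable
    · exact a12.reachable
    · exact SimpleGraph.Reachable.refl 2
    · exact a32.reachable
    · exact a42.reachable
    · exact (a51.reachable).trans a12.reachable
    · exact (a64.reachable).trans a42.reachable
    · exact ((a76.reachable).trans a64.reachable).trans a42.reachable
    · exact ((a87.reachable).trans a76.reachable).trans ((a64.reachable).trans a42.reachable)
  exact (h u).trans (h v).symm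

/-- Start configuration: robot `0` at vertex `0`, robot `1` at vertex `4`. -/
def xI9 : Fin 2 → Fin 9 := fun i => if i.val = 0 then 0 else 4

/-- Goal configuration: robot `0` to vertex `3`, robot `1` to vertex `5`. -/
def xG9 : Fin 2 → Fin 9 := fun i => if i.val = 0 then 3 else 5

/-- Distance-to-goal potential for robot `0`. -/
def phiA : Fin 9 → ℕ := ![3, 2, 1, 0, 2, 3, 3, 4, 4]

/-- Distance-to-goal potential for robot `1`. -/
def phiB : Fin 9 → ℕ := ![2, 1, 2, 3, 3, 0, 3, 2, 1]

lemma phiA_lip : ∀ u v, G9.Adj u v → phiA u ≤ phiA v + 1 := by decide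
lemma phiB_lip : ∀ u v, G9.Adj u v → phiB u ≤ phiB v + 1 := by decide

/-- Robot `0` going straight `0, 1, 2, 3`. -/
def pA : ℕ → Fin 9
  | 0 => 0
  | 1 => 1
  | 2 => 2
  | _ + 3 => 3

/-- Robot `1` waiting twice and then going straight `4, 4, 4, 2, 1, 5`. -/
def pB1 : ℕ → Fin 9
  | 0 => 4
  | 1 => 4
  | 2 => 4
  | 3 => 2
  | 4 => 1
  | _ + 5 => 5

/-- Robot `1` taking the detour `4, 6, 7, 8, 5`. -/
def pB2 : ℕ → Fin 9
  | 0 => 4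
  | 1 => 6
  | 2 => 7
  | 3 => 8
  | _ + 4 => 5

lemma pA_feas : FeasiblePath G9 0 3 pA := by
  have harr : arrivalTime (3 : Fin 9) pA = 3 := by
    refine arrivalTime_eq rfl ?_
    intro t ht
    interval_cases t <;> decide
  refine ⟨rfl, ⟨3, rfl⟩, ?_, ?_⟩
  · intro t ht
    rw [harr] at ht
    obtain ⟨n, rfl⟩ : ∃ n, t = n + 3 := ⟨t - 3, by omega⟩
    rfl
  · intro t
    rcases t with _ | _ | _ | t
    · left; decide
    · left; decide
    · left; decide
    · right; rfl

lemma pB1_feas : FeasiblePath G9 4 5 pB1 := by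
  have harr : arrivalTime (5 : Fin 9) pB1 = 5 := by
    refine arrivalTime_eq rfl ?_
    intro t ht
    interval_cases t <;> decide
  refine ⟨rfl, ⟨5, rfl⟩, ?_, ?_⟩
  · intro t ht
    rw [harr] at ht
    obtain ⟨n, rfl⟩ : ∃ n, t = n + 5 := ⟨t - 5, by omega⟩
    rfl
  · intro t
    rcases t with _ | _ | _ | _ | _ | t
    · right; rfl
    · right; rfl
    · left; decide
    · left; decide
    · left; decide
    · right; rfl

lemma pB2_feas : FeasiblePath G9 4 5 pB2 := by
  have harr : arrivalTime (5 : Fin 9) pB2 = 4 := by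
    refine arrivalTime_eq rfl ?_
    intro t ht
    interval_cases t <;> decide
  refine ⟨rfl, ⟨4, rfl⟩, ?_, ?_⟩
  · intro t ht
    rw [harr] at ht
    obtain ⟨n, rfl⟩ : ∃ n, t = n + 4 := ⟨t - 4, by omega⟩
    rfl
  · intro t
    rcases t with _ | _ | _ | _ | t
    · left; decide
    · left; decide
    · left; decide
    · left; decide
    · right; rfl

lemma nc1 : ¬ Collide pA pB1 := by
  rintro (⟨t, ht⟩ | ⟨t, h1, h2, h3⟩)
  · revert ht
    rcases t with _ | _ | _ | _ | _ | t <;> exact ne_of_beq_false rfl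
  · revert h1 h2 h3
    rcases t with _ | _ | _ | _ | _ | t
    · decide
    · decide
    · decide
    · decide
    · decide
    · intro h1 _ _
      exact absurd h1 (ne_of_beq_false rfl)

lemma nc2 : ¬ Collide pA pB2 := by
  have disj : ∀ t t', pA t ≠ pB2 t' := by
    intro t t'
    rcases t with _ | _ | _ | t <;> rcases t' with _ | _ | _ | _ | t' <;>
      exact ne_of_beq_false rfl
  rintro (⟨t, ht⟩ | ⟨t, h1, h2, h3⟩)
  · exact disj t t ht
  · exact disj t (t + 1) h1

/-- The wait-based solution: total distance `6`, makespan `5`. -/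
def w1 : Fin 2 → ℕ → Fin 9 := fun i => if i.val = 0 then pA else pB1

/-- The detour-based solution: total distance `7`, makespan `4`. -/
def w2 : Fin 2 → ℕ → Fin 9 := fun i => if i.val = 0 then pA else pB2

lemma pairwise_of {q : Fin 2 → ℕ → Fin 9} (h : ¬ Collide (q 0) (q 1)) :
    Pairwise fun i j => ¬ Collide (q i) (q j) := by
  intro i j hij
  fin_cases i <;> fin_cases j
  · exact absurd rfl hij
  · exact h
  · exact fun hc => h (collide_symm hc)
  · exact absurd rfl hij

lemma w1_sol : IsSolution G9 xI9 xG9 w1 := by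
  constructor
  · intro i
    fin_cases i
    · exact pA_feas
    · exact pB1_feas
  · exact pairwise_of nc1

lemma w2_sol : IsSolution G9 xI9 xG9 w2 := by
  constructor
  · intro i
    fin_cases i
    · exact pA_feas
    · exact pB2_feas
  · exact pairwise_of nc2

lemma ncard_three {a b c : ℕ} (hab : a < b) (hbc : b < c) :
    ({a, b, c} : Set ℕ).ncard = 3 := by
  rw [Set.ncard_insert_of_notMem (by simp; omega),
    Set.ncard_insert_of_notMem (by simp; omega), Set.ncard_singleton]

lemma pathLen_le_three {p : ℕ → Fin 9} {a b c : ℕ} (hab : a < b) (hbc : b < c)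
    (h : ∀ t, t ≠ a → t ≠ b → t ≠ c → p t = p (t + 1)) : pathLen p ≤ 3 := by
  have hsub : {t | p t ≠ p (t + 1)} ⊆ ({a, b, c} : Set ℕ) := by
    intro t ht
    simp only [Set.mem_setOf_eq] at ht
    simp only [Set.mem_insert_iff, Set.mem_singleton_iff]
    by_contra hc
    push_neg at hc
    exact ht (h t hc.1 hc.2.1 hc.2.2)
  calc pathLen p ≤ ({a, b, c} : Set ℕ).ncard :=
        Set.ncard_le_ncard hsub (Set.toFinite _)
    _ = 3 := ncard_three hab hbc

lemma pA_len : pathLen pA ≤ 3 := by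
  refine pathLen_le_three (a := 0) (b := 1) (c := 2) (by omega) (by omega) ?_
  intro t h0 h1 h2
  obtain ⟨n, rfl⟩ : ∃ n, t = n + 3 := ⟨t - 3, by omega⟩
  rfl

lemma pB1_len : pathLen pB1 ≤ 3 := by
  refine pathLen_le_three (a := 2) (b := 3) (c := 4) (by omega) (by omega) ?_
  intro t h0 h1 h2
  rcases t with _ | _ | _ | _ | _ | t
  · rfl
  · rfl
  · exact absurd rfl h0
  · exact absurd rfl h1
  · exact absurd rfl h2
  · rfl

lemma arr_le_makespan (xG : Fin 2 → Fin 9) (p : Fin 2 → ℕ → Fin 9) (i : Fin 2) :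
    arrivalTime (xG i) (p i) ≤ makespan xG p :=
  Finset.le_sup (f := fun j => arrivalTime (xG j) (p j)) (Finset.mem_univ i)

end MPPFormal
namespace MPPFormal

/-- There exists a solvable MPP instance such that no solution simultaneously
attains the minimum total distance and the minimum makespan. -/
theorem pareto_totalDist_makespan :
    ∃ (k : ℕ) (V : Type) (G : SimpleGraph V) (xI xG : Fin k → V),
      IsMPPInstance G xI xG ∧ (∃ p, IsSolution G xI xG p) ∧
      ¬ ∃ p, IsSolution G xI xG p ∧ totalDist p = minTotalDist G xI xG ∧
        makespan xG p = minMakespan G xI xG := by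
  refine ⟨2, Fin 9, G9, xI9, xG9, ⟨G9_conn, ?_, ?_⟩, ⟨w1, w1_sol⟩, ?_⟩
  · intro i j hij
    fin_cases i <;> fin_cases j <;> first | rfl | exact absurd hij (by decide)
  · intro i j hij
    fin_cases i <;> fin_cases j <;> first | rfl | exact absurd hij (by decide)
  rintro ⟨p, hsol, hTD, hMS⟩
  have hfA : FeasiblePath G9 0 3 (p 0) := hsol.1 0
  have hfB : FeasiblePath G9 4 5 (p 1) := hsol.1 1
  -- each robot needs at least 3 moves
  have h3A : 3 ≤ pathLen (p 0) := by
    have := pathLen_ge hfA phiA phiA_lip (by decide)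
    exact this
  have h3B : 3 ≤ pathLen (p 1) := by
    have := pathLen_ge hfB phiB phiB_lip (by decide)
    exact this
  -- the minimum total distance is at most 6
  have hmin6 : minTotalDist G9 xI9 xG9 ≤ 6 := by
    refine le_trans (Nat.sInf_le ⟨w1, w1_sol, rfl⟩) ?_
    rw [totalDist, Fin.sum_univ_two]
    exact add_le_add pA_len pB1_len
  have hsum : totalDist p = pathLen (p 0) + pathLen (p 1) := by
    rw [totalDist, Fin.sum_univ_two]
  have hlA : pathLen (p 0) = 3 := by omega
  have hlB : pathLen (p 1) = 3 := by omega
  -- the minimum makespan is at most 4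
  have hmk4 : minMakespan G9 xI9 xG9 ≤ 4 := by
    refine le_trans (Nat.sInf_le ⟨w2, w2_sol, rfl⟩) ?_
    refine Finset.sup_le ?_
    intro i _
    fin_cases i
    · show arrivalTime (3 : Fin 9) pA ≤ 4
      exact le_trans (Nat.sInf_le (show pA 3 = 3 from rfl)) (by omega)
    · show arrivalTime (5 : Fin 9) pB2 ≤ 4
      exact Nat.sInf_le (show pB2 4 = 5 from rfl)
  -- structure of both paths
  obtain ⟨t1, t2, t3, v1, v2, h12, h23, ha1, ha2, ha3, hA0, hAc1, hAc2, hA3, harrA⟩ :=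
    path_structure hfA hlA
  obtain ⟨u1, u2, u3, z1, z2, g12, g23, hb1, hb2, hb3, hB0, hBc2, hBc1, hB5, harrB⟩ :=
    path_structure hfB hlB
  have hv2 : v2 = 2 := (by decide : ∀ v : Fin 9, G9.Adj v 3 → v = 2) v2 ha3
  subst hv2
  have hv1 : v1 = 1 := (by decide : ∀ v : Fin 9, G9.Adj 0 v → v = 1) v1 ha1
  subst hv1
  have hz : z1 = 2 ∧ z2 = 1 :=
    (by decide : ∀ v w : Fin 9, G9.Adj 4 v → G9.Adj w 5 → G9.Adj v w → v = 2 ∧ w = 1)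
      z1 z2 hb1 hb3 hb2
  obtain ⟨hz1, hz2⟩ := hz
  subst hz1
  subst hz2
  -- both arrival times are at most 4
  have hmkA : arrivalTime (3 : Fin 9) (p 0) ≤ 4 := by
    have h := arr_le_makespan xG9 p 0
    rw [hMS] at h
    exact le_trans h hmk4
  have hmkB : arrivalTime (5 : Fin 9) (p 1) ≤ 4 := by
    have h := arr_le_makespan xG9 p 1
    rw [hMS] at h
    exact le_trans h hmk4
  rw [harrA] at hmkA
  rw [harrB] at hmkB
  have hnc : ¬ Collide (p 0) (p 1) := hsol.2 (show (0 : Fin 2) ≠ 1 by decide)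
  have ht3 : t3 ≤ 3 := by omega
  have hu3 : u3 ≤ 3 := by omega
  -- exhaustive case analysis: some collision is unavoidable
  interval_cases t3 <;> interval_cases t2 <;> interval_cases t1 <;>
    interval_cases u3 <;> interval_cases u2 <;> interval_cases u1 <;>
    first
    | exact hnc (Or.inl ⟨2, by
        rw [hAc1 2 (by omega) (by omega), hBc1 2 (by omega) (by omega)]⟩)
    | exact hnc (Or.inl ⟨2, by
        rw [hAc2 2 (by omega) (by omega), hBc2 2 (by omega) (by omega)]⟩)
    | exact hnc (Or.inr ⟨1,
        by rw [hAc1 1 (by omega) (by omega), hBc1 2 (by omega) (by omega)],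
        by rw [hAc2 2 (by omega) (by omega), hBc2 1 (by omega) (by omega)],
        by rw [hAc1 1 (by omega) (by omega), hAc2 2 (by omega) (by omega)]; decide⟩)
    | exact hnc (Or.inr ⟨2,
        by rw [hAc1 2 (by omega) (by omega), hBc1 3 (by omega) (by omega)],
        by rw [hAc2 3 (by omega) (by omega), hBc2 2 (by omega) (by omega)],
        by rw [hAc1 2 (by omega) (by omega), hAc2 3 (by omega) (by omega)]; decide⟩)

end MPPFormal
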